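/- arXiv:1709.10039 — 6 statements merged into one kernel-verified Lean document; each statement's English description precedes it below -/
import Mathlib

section
/- Let q be a t-hierarchical query, let free(q) denote its free variables, and for each subset Z of free(q) let A_Z be the set of atoms ψ with Vars(ψ) ⊋ (Vars(ψ) ∩ free(q)) = Z. Then for any two distinct subsets Z, Z' of free(q), the sets of non-free variables occurring in atoms of A_Z and in atoms of A_{Z'} are disjoint. That is, if Y_Z = (⋃_{ψ ∈ A_Z} Vars(ψ)) \ Z and Y_{Z'} = (⋃_{ψ ∈ A_{Z'}} Vars(ψ)) \ Z', then Y_Z ∩ Y_{Z'} = ∅. -/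
/-- in a t-hierarchical query, for distinct Z, Z' ⊆ free(q), the
non-free variable sets Y_Z and Y_{Z'} of the atom classes A_Z and A_{Z'}
are disjoint.

A query is given by a finite atom set `atomSet`, a variable set `varsOf ψ` for
each atom, and a set `free` of free variables; `atoms(x)` is the set of atoms
containing `x`. -/
theorem YZ_disjoint {V A : Type*} [DecidableEq V] [DecidableEq A]
    (atomSet : Finset A) (varsOf : A → Finset V) (free : Finset V)
    -- condition (i) of t-hierarchical, for non-free variables
    (ht1 : ∀ x ∈ atomSet.biUnion varsOf, x ∉ free →
           ∀ y ∈ atomSet.biUnion varsOf, y ∉ free →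
        atomSet.filter (fun ψ => x ∈ varsOf ψ) ⊆ atomSet.filter (fun ψ => y ∈ varsOf ψ)
      ∨ atomSet.filter (fun ψ => y ∈ varsOf ψ) ⊆ atomSet.filter (fun ψ => x ∈ varsOf ψ)
      ∨ atomSet.filter (fun ψ => x ∈ varsOf ψ) ∩ atomSet.filter (fun ψ => y ∈ varsOf ψ) = ∅)
    -- condition (ii) of t-hierarchical
    (ht2 : ∀ x ∈ free, ∀ y ∈ atomSet.biUnion varsOf, y ∉ free →
        atomSet.filter (fun ψ => x ∈ varsOf ψ) ∩ atomSet.filter (fun ψ => y ∈ varsOf ψ) = ∅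
      ∨ atomSet.filter (fun ψ => y ∈ varsOf ψ) ⊆ atomSet.filter (fun ψ => x ∈ varsOf ψ))
    (Z Z' : Finset V) (hZ : Z ⊆ free) (hZ' : Z' ⊆ free) (hne : Z ≠ Z') :
    -- Y_Z ∩ Y_{Z'} = ∅, where A_Z = {ψ | Vars(ψ) ∩ free = Z ⊊ Vars(ψ)} and
    -- Y_Z = (⋃_{ψ ∈ A_Z} Vars(ψ)) \ Z
    ((atomSet.filter (fun ψ => varsOf ψ ∩ free = Z ∧ Z ⊂ varsOf ψ)).biUnion varsOf \ Z)
      ∩ ((atomSet.filter (fun ψ => varsOf ψ ∩ free = Z' ∧ Z' ⊂ varsOf ψ)).biUnion varsOf \ Z')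
      = ∅ := by
  ext y
  simp only [Finset.mem_inter, Finset.mem_sdiff, Finset.mem_biUnion, Finset.mem_filter,
    Finset.notMem_empty, iff_false]
  rintro ⟨⟨⟨ψ, ⟨hψA, hint, hsub⟩, hyψ⟩, hyZ⟩, ⟨ψ', ⟨hψ'A, hint', hsub'⟩, hyψ'⟩, hyZ'⟩
  have hyf : y ∉ free := fun h => hyZ (by rw [← hint]; exact Finset.mem_inter.mpr ⟨hyψ, h⟩)
  have hyU : y ∈ atomSet.biUnion varsOf := Finset.mem_biUnion.mpr ⟨ψ, hψA, hyψ⟩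
  have key : ∀ (W W' : Finset V) (φ φ' : A), φ ∈ atomSet → φ' ∈ atomSet →
      varsOf φ ∩ free = W → varsOf φ' ∩ free = W' → W ⊆ varsOf φ →
      y ∈ varsOf φ → y ∈ varsOf φ' → W ⊆ W' := by
    intro W W' φ φ' hA hA' hi hi' hWs hy hy' z hz
    have hzf : z ∈ free := by rw [← hi] at hz; exact (Finset.mem_inter.mp hz).2
    rcases ht2 z hzf y hyU hyf with h | h
    · exfalso
      have : φ ∈ atomSet.filter (fun ψ => z ∈ varsOf ψ) ∩
          atomSet.filter (fun ψ => y ∈ varsOf ψ) :=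
        Finset.mem_inter.mpr ⟨Finset.mem_filter.mpr ⟨hA, hWs hz⟩,
          Finset.mem_filter.mpr ⟨hA, hy⟩⟩
      rw [h] at this
      exact Finset.notMem_empty _ this
    · have hz' : z ∈ varsOf φ' := (Finset.mem_filter.mp
        (h (Finset.mem_filter.mpr ⟨hA', hy'⟩))).2
      rw [← hi']; exact Finset.mem_inter.mpr ⟨hz', hzf⟩
  exact hne (le_antisymm
    (key Z Z' ψ ψ' hψA hψ'A hint hint' hsub.subset hyψ hyψ')
    (key Z' Z ψ' ψ hψ'A hψA hint' hint hsub'.subset hyψ' hyψ))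
end

section
/- Let q be a t-hierarchical query and Z a subset of free(q). Let A_Z be the set of atoms ψ of q with Vars(ψ) ⊋ (Vars(ψ) ∩ free(q)) = Z. Then the query q_Z whose atom set is A_Z, with variables ⋃_{ψ∈A_Z} Vars(ψ) and free variables Z, is q-hierarchical. -/
/-- for a t-hierarchical query q and Z ⊆ free(q), the subquery
q_Z with atom set A_Z = {ψ | Vars(ψ) ∩ free = Z ⊊ Vars(ψ)}, variables
⋃_{ψ ∈ A_Z} Vars(ψ) and free variables Z, is q-hierarchical.
Here atoms_{q_Z}(x) = A_Z.filter (x ∈ varsOf ·). -/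
theorem subquery_qZ_qHierarchical {V A : Type*} [DecidableEq V] [DecidableEq A]
    (atomSet : Finset A) (varsOf : A → Finset V) (free : Finset V)
    -- condition (i) of t-hierarchical, for non-free variables
    (ht1 : ∀ x ∈ atomSet.biUnion varsOf, x ∉ free →
           ∀ y ∈ atomSet.biUnion varsOf, y ∉ free →
        atomSet.filter (fun ψ => x ∈ varsOf ψ) ⊆ atomSet.filter (fun ψ => y ∈ varsOf ψ)
      ∨ atomSet.filter (fun ψ => y ∈ varsOf ψ) ⊆ atomSet.filter (fun ψ => x ∈ varsOf ψ)
      ∨ atomSet.filter (fun ψ => x ∈ varsOf ψ) ∩ atomSet.filter (fun ψ => y ∈ varsOf ψ) = ∅)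
    -- condition (ii) of t-hierarchical
    (ht2 : ∀ x ∈ free, ∀ y ∈ atomSet.biUnion varsOf, y ∉ free →
        atomSet.filter (fun ψ => x ∈ varsOf ψ) ∩ atomSet.filter (fun ψ => y ∈ varsOf ψ) = ∅
      ∨ atomSet.filter (fun ψ => y ∈ varsOf ψ) ⊆ atomSet.filter (fun ψ => x ∈ varsOf ψ))
    (Z : Finset V) (hZ : Z ⊆ free) :
    -- q_Z is q-hierarchical: condition (i) ...
    (∀ x ∈ (atomSet.filter (fun ψ => varsOf ψ ∩ free = Z ∧ Z ⊂ varsOf ψ)).biUnion varsOf,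
     ∀ y ∈ (atomSet.filter (fun ψ => varsOf ψ ∩ free = Z ∧ Z ⊂ varsOf ψ)).biUnion varsOf,
        (atomSet.filter (fun ψ => varsOf ψ ∩ free = Z ∧ Z ⊂ varsOf ψ)).filter (fun ψ => x ∈ varsOf ψ)
          ⊆ (atomSet.filter (fun ψ => varsOf ψ ∩ free = Z ∧ Z ⊂ varsOf ψ)).filter (fun ψ => y ∈ varsOf ψ)
      ∨ (atomSet.filter (fun ψ => varsOf ψ ∩ free = Z ∧ Z ⊂ varsOf ψ)).filter (fun ψ => y ∈ varsOf ψ)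
          ⊆ (atomSet.filter (fun ψ => varsOf ψ ∩ free = Z ∧ Z ⊂ varsOf ψ)).filter (fun ψ => x ∈ varsOf ψ)
      ∨ (atomSet.filter (fun ψ => varsOf ψ ∩ free = Z ∧ Z ⊂ varsOf ψ)).filter (fun ψ => x ∈ varsOf ψ)
          ∩ (atomSet.filter (fun ψ => varsOf ψ ∩ free = Z ∧ Z ⊂ varsOf ψ)).filter (fun ψ => y ∈ varsOf ψ) = ∅)
    -- ... and condition (ii), with free variables Z
    ∧ (∀ x ∈ (atomSet.filter (fun ψ => varsOf ψ ∩ free = Z ∧ Z ⊂ varsOf ψ)).biUnion varsOf,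
       ∀ y ∈ (atomSet.filter (fun ψ => varsOf ψ ∩ free = Z ∧ Z ⊂ varsOf ψ)).biUnion varsOf,
        (atomSet.filter (fun ψ => varsOf ψ ∩ free = Z ∧ Z ⊂ varsOf ψ)).filter (fun ψ => x ∈ varsOf ψ)
          ⊂ (atomSet.filter (fun ψ => varsOf ψ ∩ free = Z ∧ Z ⊂ varsOf ψ)).filter (fun ψ => y ∈ varsOf ψ)
        → x ∈ Z → y ∈ Z) := by
  set AZ := atomSet.filter (fun ψ => varsOf ψ ∩ free = Z ∧ Z ⊂ varsOf ψ) with hAZ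
  have hfull : ∀ x ∈ Z, AZ.filter (fun ψ => x ∈ varsOf ψ) = AZ := by
    intro x hx
    apply Finset.filter_true_of_mem
    intro ψ hψ
    obtain ⟨_, _, hsub⟩ := Finset.mem_filter.mp hψ
    exact hsub.subset hx
  have hmemZ : ∀ x, x ∈ AZ.biUnion varsOf → x ∈ free → x ∈ Z := by
    intro x hxb hxf
    obtain ⟨ψ, hψ, hxψ⟩ := Finset.mem_biUnion.mp hxb
    obtain ⟨_, heq, _⟩ := Finset.mem_filter.mp hψ
    rw [← heq]
    exact Finset.mem_inter.mpr ⟨hxψ, hxf⟩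
  have hmemq : ∀ x, x ∈ AZ.biUnion varsOf → x ∈ atomSet.biUnion varsOf := by
    intro x hxb
    obtain ⟨ψ, hψ, hxψ⟩ := Finset.mem_biUnion.mp hxb
    exact Finset.mem_biUnion.mpr ⟨ψ, (Finset.mem_filter.mp hψ).1, hxψ⟩
  constructor
  · intro x hx y hy
    by_cases hxf : x ∈ free
    · right; left
      rw [hfull x (hmemZ x hx hxf)]
      exact Finset.filter_subset _ _
    by_cases hyf : y ∈ free
    · left
      rw [hfull y (hmemZ y hy hyf)]
      exact Finset.filter_subset _ _
    rcases ht1 x (hmemq x hx) hxf y (hmemq y hy) hyf with h | h | h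
    · left
      intro ψ hψ
      obtain ⟨hψAZ, hxψ⟩ := Finset.mem_filter.mp hψ
      have hy' := h (Finset.mem_filter.mpr ⟨(Finset.mem_filter.mp hψAZ).1, hxψ⟩)
      exact Finset.mem_filter.mpr ⟨hψAZ, (Finset.mem_filter.mp hy').2⟩
    · right; left
      intro ψ hψ
      obtain ⟨hψAZ, hyψ⟩ := Finset.mem_filter.mp hψ
      have hx' := h (Finset.mem_filter.mpr ⟨(Finset.mem_filter.mp hψAZ).1, hyψ⟩)
      exact Finset.mem_filter.mpr ⟨hψAZ, (Finset.mem_filter.mp hx').2⟩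
    · right; right
      rw [Finset.eq_empty_iff_forall_notMem] at h ⊢
      intro ψ hψ
      obtain ⟨hψ1, hψ2⟩ := Finset.mem_inter.mp hψ
      obtain ⟨hψAZ, hxψ⟩ := Finset.mem_filter.mp hψ1
      obtain ⟨_, hyψ⟩ := Finset.mem_filter.mp hψ2
      have hψa := (Finset.mem_filter.mp hψAZ).1
      exact h ψ (Finset.mem_inter.mpr ⟨Finset.mem_filter.mpr ⟨hψa, hxψ⟩,
        Finset.mem_filter.mpr ⟨hψa, hyψ⟩⟩)
  · intro x hx y hy hss hxZ
    exfalso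
    rw [hfull x hxZ] at hss
    exact hss.not_subset (Finset.filter_subset _ _)
end

section
/- If a conjunctive query q is q-hierarchical, then its homomorphic core is q-hierarchical; similarly, if q is t-hierarchical, then its homomorphic core is t-hierarchical. -/
/-- the homomorphic core of a q-hierarchical (t-hierarchical) CQ
is q-hierarchical (t-hierarchical).

Following the context, the core is an induced subquery of q on a subset A' of
its atoms containing all free variables: for a variable x of the subquery,
atoms_{q'}(x) = atoms_q(x) ∩ A'.  We show both hierarchy conditions are
inherited by any such induced subquery, hence in particular by the core.
A query is given by its finite atom set `atomSet`, the variable set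
`varsOf ψ` of each atom, and the set `free` of free variables;
atoms(x) = atomSet.filter (x ∈ varsOf ·). -/
theorem core_preserves_hierarchical {V A : Type*} [DecidableEq V] [DecidableEq A]
    (atomSet : Finset A) (varsOf : A → Finset V) (free : Finset V)
    (A' : Finset A) (hsub : A' ⊆ atomSet)
    (hfree : free ⊆ A'.biUnion varsOf) :
    -- q-hierarchical is preserved:
    (((∀ x ∈ atomSet.biUnion varsOf, ∀ y ∈ atomSet.biUnion varsOf,
          atomSet.filter (fun ψ => x ∈ varsOf ψ) ⊆ atomSet.filter (fun ψ => y ∈ varsOf ψ)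
        ∨ atomSet.filter (fun ψ => y ∈ varsOf ψ) ⊆ atomSet.filter (fun ψ => x ∈ varsOf ψ)
        ∨ atomSet.filter (fun ψ => x ∈ varsOf ψ) ∩ atomSet.filter (fun ψ => y ∈ varsOf ψ) = ∅)
      ∧ (∀ x ∈ atomSet.biUnion varsOf, ∀ y ∈ atomSet.biUnion varsOf,
          atomSet.filter (fun ψ => x ∈ varsOf ψ) ⊂ atomSet.filter (fun ψ => y ∈ varsOf ψ)
          → x ∈ free → y ∈ free)) →
     ((∀ x ∈ A'.biUnion varsOf, ∀ y ∈ A'.biUnion varsOf,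
          A'.filter (fun ψ => x ∈ varsOf ψ) ⊆ A'.filter (fun ψ => y ∈ varsOf ψ)
        ∨ A'.filter (fun ψ => y ∈ varsOf ψ) ⊆ A'.filter (fun ψ => x ∈ varsOf ψ)
        ∨ A'.filter (fun ψ => x ∈ varsOf ψ) ∩ A'.filter (fun ψ => y ∈ varsOf ψ) = ∅)
      ∧ (∀ x ∈ A'.biUnion varsOf, ∀ y ∈ A'.biUnion varsOf,
          A'.filter (fun ψ => x ∈ varsOf ψ) ⊂ A'.filter (fun ψ => y ∈ varsOf ψ)
          → x ∈ free → y ∈ free)))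
    -- and t-hierarchical is preserved:
    ∧ (((∀ x ∈ atomSet.biUnion varsOf, x ∉ free →
         ∀ y ∈ atomSet.biUnion varsOf, y ∉ free →
          atomSet.filter (fun ψ => x ∈ varsOf ψ) ⊆ atomSet.filter (fun ψ => y ∈ varsOf ψ)
        ∨ atomSet.filter (fun ψ => y ∈ varsOf ψ) ⊆ atomSet.filter (fun ψ => x ∈ varsOf ψ)
        ∨ atomSet.filter (fun ψ => x ∈ varsOf ψ) ∩ atomSet.filter (fun ψ => y ∈ varsOf ψ) = ∅)
      ∧ (∀ x ∈ free, ∀ y ∈ atomSet.biUnion varsOf, y ∉ free →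
          atomSet.filter (fun ψ => x ∈ varsOf ψ) ∩ atomSet.filter (fun ψ => y ∈ varsOf ψ) = ∅
        ∨ atomSet.filter (fun ψ => y ∈ varsOf ψ) ⊆ atomSet.filter (fun ψ => x ∈ varsOf ψ))) →
     ((∀ x ∈ A'.biUnion varsOf, x ∉ free →
       ∀ y ∈ A'.biUnion varsOf, y ∉ free →
          A'.filter (fun ψ => x ∈ varsOf ψ) ⊆ A'.filter (fun ψ => y ∈ varsOf ψ)
        ∨ A'.filter (fun ψ => y ∈ varsOf ψ) ⊆ A'.filter (fun ψ => x ∈ varsOf ψ)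
        ∨ A'.filter (fun ψ => x ∈ varsOf ψ) ∩ A'.filter (fun ψ => y ∈ varsOf ψ) = ∅)
      ∧ (∀ x ∈ free, ∀ y ∈ A'.biUnion varsOf, y ∉ free →
          A'.filter (fun ψ => x ∈ varsOf ψ) ∩ A'.filter (fun ψ => y ∈ varsOf ψ) = ∅
        ∨ A'.filter (fun ψ => y ∈ varsOf ψ) ⊆ A'.filter (fun ψ => x ∈ varsOf ψ)))) := by

  have hmem : ∀ x, x ∈ A'.biUnion varsOf → x ∈ atomSet.biUnion varsOf := by
    intro x hx
    simp only [Finset.mem_biUnion] at hx ⊢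
    obtain ⟨a, ha, hxa⟩ := hx
    exact ⟨a, hsub ha, hxa⟩
  have hsubT : ∀ x y : V,
      atomSet.filter (fun ψ => x ∈ varsOf ψ) ⊆ atomSet.filter (fun ψ => y ∈ varsOf ψ) →
      A'.filter (fun ψ => x ∈ varsOf ψ) ⊆ A'.filter (fun ψ => y ∈ varsOf ψ) := by
    intro x y h ψ hψ
    rw [Finset.mem_filter] at hψ ⊢
    exact ⟨hψ.1, (Finset.mem_filter.mp (h (Finset.mem_filter.mpr ⟨hsub hψ.1, hψ.2⟩))).2⟩
  have hdisT : ∀ x y : V,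
      atomSet.filter (fun ψ => x ∈ varsOf ψ) ∩ atomSet.filter (fun ψ => y ∈ varsOf ψ) = ∅ →
      A'.filter (fun ψ => x ∈ varsOf ψ) ∩ A'.filter (fun ψ => y ∈ varsOf ψ) = ∅ := by
    intro x y h
    apply Finset.eq_empty_of_forall_notMem
    intro ψ hψ
    simp only [Finset.mem_inter, Finset.mem_filter] at hψ
    have : ψ ∈ atomSet.filter (fun ψ => x ∈ varsOf ψ) ∩ atomSet.filter (fun ψ => y ∈ varsOf ψ) := by
      simp only [Finset.mem_inter, Finset.mem_filter]
      exact ⟨⟨hsub hψ.1.1, hψ.1.2⟩, ⟨hsub hψ.2.1, hψ.2.2⟩⟩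
    rw [h] at this
    exact absurd this (Finset.notMem_empty ψ)
  have hnon : ∀ x ∈ A'.biUnion varsOf, (A'.filter (fun ψ => x ∈ varsOf ψ)).Nonempty := by
    intro x hx
    simp only [Finset.mem_biUnion] at hx
    obtain ⟨a, ha, hxa⟩ := hx
    exact ⟨a, Finset.mem_filter.mpr ⟨ha, hxa⟩⟩
  constructor
  · rintro ⟨hq1, hq2⟩
    constructor
    · intro x hx y hy
      rcases hq1 x (hmem x hx) y (hmem y hy) with h | h | h
      · exact Or.inl (hsubT x y h)
      · exact Or.inr (Or.inl (hsubT y x h))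
      · exact Or.inr (Or.inr (hdisT x y h))
    · intro x hx y hy hss hxf
      rcases hq1 x (hmem x hx) y (hmem y hy) with h | h | h
      · refine hq2 x (hmem x hx) y (hmem y hy) ?_ hxf
        rw [ssubset_iff_subset_not_subset]
        exact ⟨h, fun hh => hss.not_subset (hsubT y x hh)⟩
      · exact absurd (hsubT y x h) hss.not_subset
      · obtain ⟨ψ, hψ⟩ := hnon x hx
        have : ψ ∈ A'.filter (fun ψ => x ∈ varsOf ψ) ∩ A'.filter (fun ψ => y ∈ varsOf ψ) :=
          Finset.mem_inter.mpr ⟨hψ, hss.1 hψ⟩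
        rw [hdisT x y h] at this
        exact absurd this (Finset.notMem_empty ψ)
  · rintro ⟨ht1, ht2⟩
    constructor
    · intro x hx hxf y hy hyf
      rcases ht1 x (hmem x hx) hxf y (hmem y hy) hyf with h | h | h
      · exact Or.inl (hsubT x y h)
      · exact Or.inr (Or.inl (hsubT y x h))
      · exact Or.inr (Or.inr (hdisT x y h))
    · intro x hxf y hy hyf
      rcases ht2 x hxf y (hmem y hy) hyf with h | h
      · exact Or.inl (hdisT x y h)
      · exact Or.inr (hsubT y x h)
end

section
/- Small-domain constraint reduction: let q be a conjunctive query, C a set of small domain constraints with restricted variable set V = rvars_C(q) and M the (finite) set of assignments α : V → Dom with α(x) ∈ Dom_{q,C}(x) for all x ∈ V. If M ≠ ∅, then for every database D satisfying C, q(D) = ⋃_{α ∈ M} q_α(D), where q_α is obtained from q by substituting α(x) for x (for all x ∈ V). In particular q is equivalent, on constraint-satisfying databases, to the UCQ ⋃_{α∈M} q_α. -/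
/-- A relational signature: relation symbols with arities. -/
structure Sig where
  Rel : Type
  ar : Rel → ℕ

/-- An atom R v₁ ⋯ v_r, whose arguments are variables or constants. -/
structure QAtom (σ : Sig) (V Dom : Type) where
  R : σ.Rel
  args : Fin (σ.ar R) → V ⊕ Dom

/-- Evaluate an argument under a valuation β. -/
def evalArg {V Dom : Type} (β : V → Dom) : V ⊕ Dom → Dom := Sum.elim β id

/-- A database: an interpretation of every relation symbol. -/
def Database (σ : Sig) (Dom : Type) := ∀ R : σ.Rel, Set (Fin (σ.ar R) → Dom)

/-- A valuation β satisfies an atom in a database. -/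
def satAtom {σ : Sig} {V Dom : Type} (Db : Database σ Dom) (β : V → Dom)
    (ψ : QAtom σ V Dom) : Prop :=
  (fun i => evalArg β (ψ.args i)) ∈ Db ψ.R

/-- The k-ary result of a query with atom set q and head tuple `head`. -/
def result {σ : Sig} {V Dom : Type} (Db : Database σ Dom)
    (q : Set (QAtom σ V Dom)) {k : ℕ} (head : Fin k → V ⊕ Dom) :
    Set (Fin k → Dom) :=
  {t | ∃ β : V → Dom, (∀ ψ ∈ q, satAtom Db β ψ) ∧ t = fun i => evalArg β (head i)}

/-- A small-domain constraint R[i] ⊆ C₀. -/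
structure SDC (σ : Sig) (Dom : Type) where
  R : σ.Rel
  i : Fin (σ.ar R)
  C0 : Set Dom

/-- D satisfies R[i] ⊆ C₀ iff the i-th projection of R^D is contained in C₀. -/
def SDC.holds {σ : Sig} {Dom : Type} (c : SDC σ Dom) (Db : Database σ Dom) : Prop :=
  ∀ t ∈ Db c.R, t c.i ∈ c.C0

/-- The constraint c applies to variable x in query q. -/
def appliesTo {σ : Sig} {V Dom : Type} (c : SDC σ Dom)
    (q : Set (QAtom σ V Dom)) (x : V) : Prop :=
  ∃ ψ ∈ q, ∃ p : Fin (σ.ar ψ.R),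
    ψ.args p = Sum.inl x ∧ ψ.R = c.R ∧ (p : ℕ) = (c.i : ℕ)

/-- Dom_{q,C}(x): the intersection of all C₀ over constraints applying to x. -/
def DomOf {σ : Sig} {V Dom : Type} (C : Set (SDC σ Dom))
    (q : Set (QAtom σ V Dom)) (x : V) : Set Dom :=
  {a | ∀ c ∈ C, appliesTo c q x → a ∈ c.C0}

/-- rvars_C(q): the variables restricted by C. -/
def rvars {σ : Sig} {V Dom : Type} (C : Set (SDC σ Dom))
    (q : Set (QAtom σ V Dom)) : Set V :=
  {x | DomOf C q x ≠ Set.univ}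

open Classical in
/-- Substitute α(x) for each restricted variable x in an argument. -/
noncomputable def substArg {V Dom : Type} (rv : Set V) (α : V → Dom) :
    V ⊕ Dom → V ⊕ Dom
  | Sum.inl x => if x ∈ rv then Sum.inr (α x) else Sum.inl x
  | Sum.inr a => Sum.inr a

/-- The atom obtained by substituting α on the restricted variables. -/
noncomputable def substAtom {σ : Sig} {V Dom : Type} (rv : Set V) (α : V → Dom)
    (ψ : QAtom σ V Dom) : QAtom σ V Dom :=
  ⟨ψ.R, fun i => substArg rv α (ψ.args i)⟩

/-- small-domain constraint reduction.  If the set M of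
admissible assignments α (with α(x) ∈ Dom_{q,C}(x) for all restricted x) is
nonempty, then on every database satisfying the constraints, the result of q
is the union over α ∈ M of the results of the substituted queries q_α. -/
theorem small_domain_reduction {σ : Sig} {V Dom : Type}
    (q : Set (QAtom σ V Dom)) (C : Set (SDC σ Dom)) {k : ℕ}
    (head : Fin k → V ⊕ Dom)
    (hM : ∃ α : V → Dom, ∀ x ∈ rvars C q, α x ∈ DomOf C q x)
    (Db : Database σ Dom) (hDb : ∀ c ∈ C, c.holds Db) :
    result Db q head
      = ⋃ α ∈ {α : V → Dom | ∀ x ∈ rvars C q, α x ∈ DomOf C q x},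
          result Db (substAtom (rvars C q) α '' q)
            (fun i => substArg (rvars C q) α (head i)) := by
  classical
  have key : ∀ (α β : V → Dom) (a : V ⊕ Dom),
      evalArg β (substArg (rvars C q) α a)
        = evalArg (fun x => if x ∈ rvars C q then α x else β x) a := by
    intro α β a
    cases a with
    | inl x =>
      by_cases h : x ∈ rvars C q <;> simp [substArg, evalArg, h]
    | inr a => rfl
  ext t
  simp only [Set.mem_iUnion, Set.mem_setOf_eq]
  constructor
  · rintro ⟨β, hβ, rfl⟩
    have hβif : (fun x => if x ∈ rvars C q then β x else β x) = β := by
      funext x; split <;> rfl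
    refine ⟨β, ?_, β, ?_, ?_⟩
    · intro x hx c hc happ
      obtain ⟨ψ, hψq, p, hargs, hR, hpi⟩ := happ
      have ht := hβ ψ hψq
      obtain ⟨cR, ci, C0⟩ := c
      dsimp at hR hpi ⊢
      subst hR
      have hp : p = ci := Fin.ext hpi
      have := hDb ⟨ψ.R, ci, C0⟩ hc _ ht
      simpa [← hp, hargs, evalArg] using this
    · rintro _ ⟨ψ, hψ, rfl⟩
      have := hβ ψ hψ
      have e := funext fun i => key β β (ψ.args i)
      rw [hβif] at e
      show (fun i => evalArg β (substArg (rvars C q) β (ψ.args i))) ∈ Db ψ.R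
      rw [e]; exact this
    · funext i; rw [key, hβif]
  · rintro ⟨α, hα, β', hβ', rfl⟩
    refine ⟨fun x => if x ∈ rvars C q then α x else β' x, ?_, ?_⟩
    · intro ψ hψ
      have := hβ' (substAtom (rvars C q) α ψ) (Set.mem_image_of_mem _ hψ)
      have e := funext fun i => key α β' (ψ.args i)
      unfold satAtom; rw [← e]; exact this
    · funext i; rw [key]
end

section
/- Applying an inclusion dependency preserves query semantics on constrained databases: let δ be the inclusion dependency R[i₁,…,i_m] ⊆ S[j₁,…,j_m], and let q contain atoms ψ₁ = R v₁⋯v_r and ψ₂ = S w₁⋯w_s such that (v_{i₁},…,v_{i_m}) = (w_{j₁},…,w_{j_m}), every w_j for j ∉ {j₁,…,j_m} is a non-free variable occurring only in ψ₂, and these w_j are pairwise distinct. Let q' be q with the atom ψ₂ removed. Then q(D) = q'(D) for every database D satisfying δ. -/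
/-- applying an inclusion dependency
δ = R[i₁,…,i_m] ⊆ S[j₁,…,j_m] preserves query semantics on δ-satisfying
databases.  q contains atoms ψ₁ = R v and ψ₂ = S w with v(i_k) = w(j_k); every
w-position outside {j₁,…,j_m} holds a non-free variable occurring only in ψ₂
and only at that position, and these variables are pairwise distinct.  Then
removing ψ₂ does not change the query result on databases satisfying δ. -/
theorem inclusion_dependency_preserves_semantics {σ : Sig} {V Dom : Type}
    (q : Set (QAtom σ V Dom)) {k : ℕ} (head : Fin k → V ⊕ Dom)
    (free : Set V) (hhead : ∀ i x, head i = Sum.inl x → x ∈ free)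
    (R S : σ.Rel) (m : ℕ)
    (iMap : Fin m → Fin (σ.ar R)) (jMap : Fin m → Fin (σ.ar S))
    (v : Fin (σ.ar R) → V ⊕ Dom) (w : Fin (σ.ar S) → V ⊕ Dom)
    (hψ₁ : (⟨R, v⟩ : QAtom σ V Dom) ∈ q) (hψ₂ : (⟨S, w⟩ : QAtom σ V Dom) ∈ q)
    (hne : (⟨R, v⟩ : QAtom σ V Dom) ≠ (⟨S, w⟩ : QAtom σ V Dom))
    (hagree : ∀ k' : Fin m, v (iMap k') = w (jMap k'))
    (hw : ∀ p : Fin (σ.ar S), p ∉ Set.range jMap →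
      ∃ x : V, w p = Sum.inl x ∧ x ∉ free
        ∧ (∀ ψ ∈ q, (∃ p', ψ.args p' = Sum.inl x) → ψ = (⟨S, w⟩ : QAtom σ V Dom))
        ∧ (∀ p', w p' = Sum.inl x → p' = p))
    (Db : Database σ Dom)
    (hδ : ∀ t ∈ Db R, ∃ s ∈ Db S, ∀ k' : Fin m, s (jMap k') = t (iMap k')) :
    result Db q head = result Db (q \ {(⟨S, w⟩ : QAtom σ V Dom)}) head := by
  classical
  ext t
  constructor
  · rintro ⟨β, hβ, ht⟩
    exact ⟨β, fun ψ hψ => hβ ψ hψ.1, ht⟩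
  · rintro ⟨β, hβ, ht⟩
    have hψ₁' : satAtom Db β (⟨R, v⟩ : QAtom σ V Dom) := hβ _ ⟨hψ₁, hne⟩
    obtain ⟨s, hs, hss⟩ := hδ _ hψ₁'
    set cond := fun x : V => ∃ p, p ∉ Set.range jMap ∧ w p = Sum.inl x with hcond
    set β' : V → Dom := fun x => if h : cond x then s h.choose else β x with hβ'def
    have hkey : ∀ x (h : cond x),
        w (h.choose) = Sum.inl x ∧ h.choose ∉ Set.range jMap :=
      fun x h => ⟨h.choose_spec.2, h.choose_spec.1⟩
    have hprops : ∀ x (h : cond x), x ∉ free ∧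
        (∀ ψ ∈ q, (∃ p', ψ.args p' = Sum.inl x) → ψ = (⟨S, w⟩ : QAtom σ V Dom)) ∧
        (∀ p', w p' = Sum.inl x → p' = h.choose) := by
      intro x h
      obtain ⟨hw1, hw2⟩ := hkey x h
      obtain ⟨x', hx'1, hx'2, hx'3, hx'4⟩ := hw _ hw2
      have hxx : x' = x := by
        rw [hw1] at hx'1
        exact (Sum.inl_injective hx'1).symm
      subst hxx
      exact ⟨hx'2, hx'3, hx'4⟩
    have hβ'_other : ∀ ψ ∈ q, ψ ≠ (⟨S, w⟩ : QAtom σ V Dom) → satAtom Db β' ψ := by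
      intro ψ hψ hne2
      have heq : (fun i => evalArg β' (ψ.args i)) = fun i => evalArg β (ψ.args i) := by
        funext i
        cases hc : ψ.args i with
        | inr d => simp [evalArg, hc]
        | inl x =>
          simp only [evalArg, Sum.elim_inl]
          show (if h : cond x then s h.choose else β x) = β x
          rw [dif_neg]
          intro h
          exact hne2 ((hprops x h).2.1 ψ hψ ⟨i, hc⟩)
      rw [satAtom, heq]
      exact hβ ψ ⟨hψ, hne2⟩
    have hβ'_ψ₂ : satAtom Db β' (⟨S, w⟩ : QAtom σ V Dom) := by
      have heq : (fun p => evalArg β' (w p)) = s := by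
        funext p
        by_cases hp : p ∈ Set.range jMap
        · obtain ⟨k', rfl⟩ := hp
          have hb : evalArg β' (w (jMap k')) = evalArg β (w (jMap k')) := by
            cases hc : w (jMap k') with
            | inr d => simp [evalArg]
            | inl x =>
              simp only [evalArg, Sum.elim_inl]
              show (if h : cond x then s h.choose else β x) = β x
              rw [dif_neg]
              intro h
              exact (hkey x h).2 ⟨k', (hprops x h).2.2 (jMap k') hc⟩
          rw [hb, ← hagree k', hss k']
        · obtain ⟨x, hx1, _, _, huniq⟩ := hw p hp
          have hcx : cond x := ⟨p, hp, hx1⟩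
          have : hcx.choose = p := huniq _ (hkey x hcx).1
          simp only [evalArg, hx1, Sum.elim_inl, hβ'def, dif_pos hcx, this]
      rw [satAtom]
      show (fun p => evalArg β' (w p)) ∈ Db S
      rw [heq]
      exact hs
    refine ⟨β', ?_, ?_⟩
    · intro ψ hψ
      by_cases hne2 : ψ = (⟨S, w⟩ : QAtom σ V Dom)
      · rw [hne2]; exact hβ'_ψ₂
      · exact hβ'_other ψ hψ hne2
    · rw [ht]
      funext i
      cases hc : head i with
      | inr d => simp [evalArg]
      | inl x =>
        simp only [evalArg, Sum.elim_inl]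
        show β x = if h : cond x then s h.choose else β x
        rw [dif_neg]
        intro h
        exact (hprops x h).1 (hhead i x hc)
end

section
/- Applying an inclusion dependency preserves q-hierarchicality: with q, q' as in the inclusion-dependency application (q' = q minus the atom ψ₂ = S w₁⋯w_s, where each w_j for j ∉ {j₁,…,j_m} is a non-free variable with atoms_q(w_j) = {ψ₂}, and Vars(q') = Vars(q) \ {w_j : j ∉ {j₁,…,j_m}}): if q is q-hierarchical, then q' is q-hierarchical. -/
/-- applying an inclusion dependency preserves q-hierarchicality.
q' is q with the atom ψ₂ removed; the variables removed with ψ₂ are exactly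
those x with atoms(x) = {ψ₂} (all of which are non-free, hypothesis `hW`),
so Vars(q') = {x ∈ Vars(q) : atoms(x) \ {ψ₂} ≠ ∅} and
atoms_{q'}(x) = atoms(x) \ {ψ₂}.  If q is q-hierarchical, so is q'. -/
theorem remove_atom_preserves_qHierarchical {V A : Type*} [DecidableEq A]
    (vars free : Finset V) (hfv : free ⊆ vars)
    (atoms : V → Finset A) (ψ₂ : A)
    (hvars : ∀ x ∈ vars, (atoms x).Nonempty)
    (hW : ∀ x ∈ vars, atoms x = {ψ₂} → x ∉ free)
    -- q is q-hierarchical: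
    (hq1 : ∀ x ∈ vars, ∀ y ∈ vars,
        atoms x ⊆ atoms y ∨ atoms y ⊆ atoms x ∨ atoms x ∩ atoms y = ∅)
    (hq2 : ∀ x ∈ vars, ∀ y ∈ vars, atoms x ⊂ atoms y → x ∈ free → y ∈ free) :
    -- q' is q-hierarchical (its variables are those with atoms(x) \ {ψ₂} ≠ ∅):
    (∀ x ∈ vars, (atoms x \ {ψ₂}).Nonempty → ∀ y ∈ vars, (atoms y \ {ψ₂}).Nonempty →
        atoms x \ {ψ₂} ⊆ atoms y \ {ψ₂} ∨ atoms y \ {ψ₂} ⊆ atoms x \ {ψ₂}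
          ∨ (atoms x \ {ψ₂}) ∩ (atoms y \ {ψ₂}) = ∅)
    ∧ (∀ x ∈ vars, (atoms x \ {ψ₂}).Nonempty → ∀ y ∈ vars, (atoms y \ {ψ₂}).Nonempty →
        atoms x \ {ψ₂} ⊂ atoms y \ {ψ₂} → x ∈ free → y ∈ free) := by
  constructor
  · intro x hx _ y hy _
    rcases hq1 x hx y hy with h | h | h
    · exact Or.inl (Finset.sdiff_subset_sdiff h (le_refl _))
    · exact Or.inr (Or.inl (Finset.sdiff_subset_sdiff h (le_refl _)))
    · refine Or.inr (Or.inr ?_)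
      apply Finset.eq_empty_of_forall_notMem
      intro a ha
      simp only [Finset.mem_inter, Finset.mem_sdiff] at ha
      have : a ∈ atoms x ∩ atoms y := Finset.mem_inter.mpr ⟨ha.1.1, ha.2.1⟩
      rw [h] at this
      exact absurd this (Finset.notMem_empty a)
  · intro x hx hxne y hy hyne hss hxf
    rcases hq1 x hx y hy with h | h | h
    · have hne : atoms x ≠ atoms y := by
        intro he; rw [he] at hss; exact hss.2 le_rfl
      exact hq2 x hx y hy ⟨h, fun hyx => hne (le_antisymm h hyx)⟩ hxf
    · exact absurd (Finset.sdiff_subset_sdiff h (le_refl _)) (fun hc => hss.2 hc)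
    · obtain ⟨a, ha⟩ := hxne
      have ha2 := hss.1 ha
      simp only [Finset.mem_sdiff] at ha ha2
      have : a ∈ atoms x ∩ atoms y := Finset.mem_inter.mpr ⟨ha.1, ha2.1⟩
      rw [h] at this
      exact absurd this (Finset.notMem_empty a)
end
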